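/- The double series Σ_{k≥1} Σ_{N≥k} e^{−(k+1)} S(N,k) (1−1/e)^{N−1}/(N−1)! converges and equals (1/e) e^{1−1/e} (1/e) e^{(e^{1−1/e}−1)/e}, i.e., c_3 = e^{−1} e^{−1/e} e^{(e^{1−1/e}−1)/e}. -/

import Mathlib

open scoped Nat
open Finset

/-- Stirling numbers of the second kind. -/
def stirling : ℕ → ℕ → ℕ
  | 0, 0 => 1
  | 0, _ + 1 => 0
  | _ + 1, 0 => 0
  | n + 1, k + 1 => (k + 1) * stirling n (k + 1) + stirling n k


lemma stirling_eq_zero : ∀ N k, N < k → stirling N k = 0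
  | 0, _+1, _ => rfl
  | N+1, k+1, h => by
      have h1 : N < k + 1 := Nat.lt_of_succ_lt h
      have h2 : N < k := Nat.lt_of_succ_lt_succ h
      simp [stirling, stirling_eq_zero N (k+1) h1, stirling_eq_zero N k h2]

/-- `U N k = ∑_{j=0}^k (-1)^j C(k,j) j^N`. -/
noncomputable def U (N k : ℕ) : ℝ :=
  ∑ j ∈ range (k+1), (-1:ℝ)^j * (k.choose j : ℝ) * (j:ℝ)^N

lemma shift_sum (s : ℕ) (g : ℕ → ℝ) :
    ∑ j ∈ range (s+2), (-1:ℝ)^j * ((s+1).choose j : ℝ) * ((j:ℝ) * g j)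
      = -((s:ℝ)+1) * ∑ i ∈ range (s+1), (-1:ℝ)^i * (s.choose i : ℝ) * g (i+1) := by
  rw [Finset.sum_range_succ']
  simp only [Nat.cast_zero, zero_mul, mul_zero, add_zero]
  rw [Finset.mul_sum]
  apply Finset.sum_congr rfl
  intro i hi
  have h : (((s+1).choose (i+1) : ℕ) : ℝ) * ((i:ℝ)+1) = ((s:ℝ)+1) * (s.choose i : ℝ) := by
    exact_mod_cast (Nat.add_one_mul_choose_eq s i).symm
  push_cast
  linear_combination (-(-1:ℝ)^i * g (i+1)) * h

lemma U_succ_eq (N s : ℕ) :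
    U N (s+1) = U N s - ∑ i ∈ range (s+1), (-1:ℝ)^i * (s.choose i : ℝ) * ((i:ℝ)+1)^N := by
  have pascal : ∀ i : ℕ, (((s+1).choose (i+1) : ℕ) : ℝ) = (s.choose i : ℝ) + (s.choose (i+1) : ℝ) := by
    intro i; exact_mod_cast congrArg (Nat.cast (R := ℝ)) (Nat.choose_succ_succ s i)
  have hA : U N (s+1)
      = (∑ i ∈ range (s+1), (-((-1:ℝ)^i * (s.choose i : ℝ) * ((i:ℝ)+1)^N)
            + -((-1:ℝ)^i * (s.choose (i+1) : ℝ) * ((i:ℝ)+1)^N)))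
        + ((0:ℝ))^N := by
    rw [U, Finset.sum_range_succ']
    congr 1
    · apply Finset.sum_congr rfl
      intro i hi
      rw [pascal i]
      push_cast
      ring
    · norm_num
  have hR : ∑ i ∈ range (s+1), (-1:ℝ)^i * (s.choose (i+1) : ℝ) * ((i:ℝ)+1)^N
      = ∑ i ∈ range s, (-1:ℝ)^i * (s.choose (i+1) : ℝ) * ((i:ℝ)+1)^N := by
    rw [Finset.sum_range_succ, Nat.choose_succ_self]
    simp
  have hB : U N s
      = -(∑ i ∈ range s, (-1:ℝ)^i * (s.choose (i+1) : ℝ) * ((i:ℝ)+1)^N) + ((0:ℝ))^N := by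
    rw [U, Finset.sum_range_succ', ← Finset.sum_neg_distrib]
    congr 1
    · apply Finset.sum_congr rfl
      intro i hi
      push_cast
      ring
    · norm_num
  rw [hA, hB, Finset.sum_add_distrib, Finset.sum_neg_distrib, Finset.sum_neg_distrib, hR]
  ring

lemma U_rec (N s : ℕ) : U (N+1) (s+1) = ((s:ℝ)+1) * (U N (s+1) - U N s) := by
  have h1 : U (N+1) (s+1)
      = ∑ j ∈ range (s+2), (-1:ℝ)^j * ((s+1).choose j : ℝ) * ((j:ℝ) * (j:ℝ)^N) := by
    rw [U]
    apply Finset.sum_congr rfl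
    intro j hj
    ring
  rw [h1, shift_sum s (fun j => (j:ℝ)^N), U_succ_eq N s]
  have : ∑ i ∈ range (s+1), (-1:ℝ)^i * (s.choose i : ℝ) * (((i+1:ℕ)):ℝ)^N
      = ∑ i ∈ range (s+1), (-1:ℝ)^i * (s.choose i : ℝ) * ((i:ℝ)+1)^N := by
    apply Finset.sum_congr rfl; intro i hi; push_cast; ring
  rw [this]
  ring

lemma U_base (k : ℕ) : U 0 k = if k = 0 then 1 else 0 := by
  have h : U 0 k = ∑ j ∈ range (k+1), (-1:ℝ)^j * (k.choose j : ℝ) := by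
    rw [U]; apply Finset.sum_congr rfl; intro j hj; rw [pow_zero, mul_one]
  have hZ : ((∑ j ∈ range (k+1), (-1:ℤ)^j * (k.choose j : ℤ) : ℤ) : ℝ)
      = ∑ j ∈ range (k+1), (-1:ℝ)^j * (k.choose j : ℝ) := by
    push_cast; ring
  rw [h, ← hZ, Int.alternating_sum_range_choose]
  split <;> simp

lemma stirling_formula : ∀ (N k : ℕ), ((k)! : ℝ) * (stirling N k : ℝ) = (-1:ℝ)^k * U N k := by
  intro N
  induction N with
  | zero =>
      intro k
      rw [U_base]
      match k with
      | 0 => simp [stirling]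
      | s+1 => simp [stirling]
  | succ N ih =>
      intro k
      match k with
      | 0 =>
          simp only [stirling, Nat.cast_zero, Nat.factorial_zero, Nat.cast_one, one_mul, pow_zero]
          rw [U]
          simp [zero_pow (Nat.succ_ne_zero N)]
      | s+1 =>
          have e1 := ih (s+1)
          have e2 := ih s
          rw [U_rec N s]
          show ((s+1)! : ℝ) * ((((s+1) * stirling N (s+1) + stirling N s : ℕ)) : ℝ) = _
          have e3 : (((s+1))! : ℝ) = ((s:ℝ)+1) * ((s)! : ℝ) := by
            rw [Nat.factorial_succ]; push_cast; ring
          push_cast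
          linear_combination ((s:ℝ)+1) * e1 + ((s:ℝ)+1) * e2 + ((stirling N s : ℝ)) * e3

/-- coefficient in the expansion -/
noncomputable def cjk (k j : ℕ) : ℝ := (-1:ℝ)^k * (-1)^j * (k.choose j : ℝ) * (j:ℝ) / ((k)! : ℝ)

lemma pointwise (x : ℝ) (k m : ℕ) :
    (stirling (m+1) k : ℝ) * x^m / ((m)! : ℝ)
      = ∑ j ∈ range (k+1), cjk k j * (((j:ℝ)*x)^m / ((m)! : ℝ)) := by
  have hk : ((k)! : ℝ) ≠ 0 := Nat.cast_ne_zero.2 k.factorial_ne_zero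
  have hm : ((m)! : ℝ) ≠ 0 := Nat.cast_ne_zero.2 m.factorial_ne_zero
  have hU : ∑ j ∈ range (k+1), cjk k j * (((j:ℝ)*x)^m / ((m)! : ℝ))
      = (x^m / (((k)! : ℝ) * ((m)! : ℝ))) * ((-1:ℝ)^k * U (m+1) k) := by
    rw [U, Finset.mul_sum, Finset.mul_sum]
    apply Finset.sum_congr rfl
    intro j hj
    rw [cjk, mul_pow, pow_succ]
    field_simp
  rw [hU, ← stirling_formula (m+1) k]
  field_simp

lemma summable_pointwise (x : ℝ) (k : ℕ) :
    Summable (fun m => (stirling (m+1) k : ℝ) * x^m / ((m)! : ℝ)) := by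
  have h : (fun m => (stirling (m+1) k : ℝ) * x^m / ((m)! : ℝ))
      = fun m => ∑ j ∈ range (k+1), cjk k j * (((j:ℝ)*x)^m / ((m)! : ℝ)) :=
    funext (pointwise x k)
  rw [h]
  apply summable_sum
  intro j hj
  exact (Real.summable_pow_div_factorial ((j:ℝ)*x)).mul_left _

lemma binom (y : ℝ) (t : ℕ) :
    ∑ i ∈ range (t+1), (-1:ℝ)^i * (t.choose i : ℝ) * y^i = (1-y)^t := by
  rw [show (1:ℝ) - y = -y + 1 by ring, add_pow]
  apply Finset.sum_congr rfl
  intro i hi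
  rw [neg_pow]
  ring

lemma tsum_exp (z : ℝ) : ∑' n : ℕ, z ^ n / ((n)! : ℝ) = Real.exp z := by
  rw [Real.exp_eq_exp_ℝ, NormedSpace.exp_eq_tsum_div]

lemma tsum_formula (x : ℝ) (t : ℕ) :
    ∑' m : ℕ, (stirling (m+1) (t+1) : ℝ) * x^m / ((m)! : ℝ)
      = Real.exp x * (Real.exp x - 1)^t / ((t)! : ℝ) := by
  have h1 : ∑' m : ℕ, (stirling (m+1) (t+1) : ℝ) * x^m / ((m)! : ℝ)
      = ∑' m : ℕ, ∑ j ∈ range (t+2), cjk (t+1) j * (((j:ℝ)*x)^m / ((m)! : ℝ)) :=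
    tsum_congr (fun m => pointwise x (t+1) m)
  have hswap := Summable.tsum_finsetSum (f := fun (j : ℕ) (m : ℕ) => cjk (t+1) j * (((j:ℝ)*x)^m / ((m)! : ℝ)))
    (s := range (t+2)) (fun j _ => (Real.summable_pow_div_factorial ((j:ℝ)*x)).mul_left _)
  rw [h1, hswap]
  have h2 : ∀ j : ℕ, ∑' m : ℕ, cjk (t+1) j * (((j:ℝ)*x)^m / ((m)! : ℝ))
      = cjk (t+1) j * Real.exp ((j:ℝ)*x) := by
    intro j
    rw [tsum_mul_left, tsum_exp]
  simp only [h2]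
  -- now a finite sum
  have h3 : ∑ j ∈ range (t+2), cjk (t+1) j * Real.exp ((j:ℝ)*x)
      = ((-1:ℝ)^(t+1) / (((t+1))! : ℝ)) *
        ∑ j ∈ range (t+2), (-1:ℝ)^j * ((t+1).choose j : ℝ) * ((j:ℝ) * Real.exp ((j:ℝ)*x)) := by
    rw [Finset.mul_sum]
    apply Finset.sum_congr rfl
    intro j hj
    rw [cjk]
    ring
  rw [h3, shift_sum t (fun j => Real.exp ((j:ℝ)*x))]
  have h4 : ∑ i ∈ range (t+1), (-1:ℝ)^i * (t.choose i : ℝ) * Real.exp (((i+1:ℕ):ℝ)*x)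
      = Real.exp x * (1 - Real.exp x)^t := by
    rw [← binom (Real.exp x) t, Finset.mul_sum]
    apply Finset.sum_congr rfl
    intro i hi
    push_cast
    rw [show ((i:ℝ)+1)*x = (i:ℝ)*x + x by ring, Real.exp_add, Real.exp_nat_mul]
    ring
  rw [h4]
  have h5 : (1 - Real.exp x)^t = (-1:ℝ)^t * (Real.exp x - 1)^t := by
    rw [show (1:ℝ) - Real.exp x = -(Real.exp x - 1) by ring, neg_pow]
  have h6 : (((t+1))! : ℝ) = ((t:ℝ)+1) * ((t)! : ℝ) := by
    rw [Nat.factorial_succ]; push_cast; ring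
  have h7 : (-1:ℝ)^t * (-1:ℝ)^t = 1 := by
    rw [← mul_pow]; norm_num
  have ht : ((t)! : ℝ) ≠ 0 := Nat.cast_ne_zero.2 t.factorial_ne_zero
  rw [h5, h6]
  have ht1 : ((t:ℝ)+1) ≠ 0 := by positivity
  field_simp
  linear_combination ((Real.exp x - 1)^t) * h7

noncomputable def xx : ℝ := 1 - 1 / Real.exp 1

lemma one_le_exp_one : (1 : ℝ) ≤ Real.exp 1 := by
  nlinarith [Real.add_one_le_exp 1]

lemma xx_nonneg : 0 ≤ xx := by
  rw [xx, sub_nonneg, div_le_one (Real.exp_pos 1)]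
  exact one_le_exp_one

noncomputable def fF : ℕ × ℕ → ℝ := fun p =>
  if 1 ≤ p.1 ∧ p.1 ≤ p.2 then
    Real.exp (-((p.1 : ℝ) + 1)) * (stirling p.2 p.1 : ℝ) * xx ^ (p.2 - 1) / (((p.2 - 1))! : ℝ)
  else 0

lemma fF_nonneg : ∀ p, 0 ≤ fF p := by
  intro p
  rw [fF]
  split
  · apply div_nonneg _ (Nat.cast_nonneg _)
    apply mul_nonneg (mul_nonneg (Real.exp_pos _).le (Nat.cast_nonneg _))
    exact pow_nonneg xx_nonneg _
  · exact le_rfl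

lemma fF_zero (N : ℕ) : fF (0, N) = 0 := by simp [fF]

lemma fF_succ (k N : ℕ) :
    fF (k+1, N) = Real.exp (-((k:ℝ)+2)) * (stirling N (k+1) : ℝ) * xx^(N-1) / (((N-1))! : ℝ) := by
  by_cases h : k + 1 ≤ N
  · have : (1 ≤ k + 1 ∧ k + 1 ≤ N) := ⟨Nat.succ_le_succ (Nat.zero_le k), h⟩
    rw [fF, if_pos this]
    norm_num
    ring_nf
  · have hc : ¬ (1 ≤ k + 1 ∧ k + 1 ≤ N) := by tauto
    rw [fF, if_neg hc, stirling_eq_zero N (k+1) (Nat.lt_of_not_le h)]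
    simp

lemma fF_succ_zero (k : ℕ) : fF (k+1, 0) = 0 := by
  rw [fF_succ, stirling_eq_zero 0 (k+1) (Nat.succ_pos k)]
  simp

lemma fF_succ_succ (k m : ℕ) :
    fF (k+1, m+1) = Real.exp (-((k:ℝ)+2)) * ((stirling (m+1) (k+1) : ℝ) * xx^m / ((m)! : ℝ)) := by
  rw [fF_succ]
  simp only [Nat.add_sub_cancel]
  ring

lemma summable_fF_inner (k : ℕ) : Summable (fun N => fF (k, N)) := by
  match k with
  | 0 => exact summable_zero.congr (fun N => (fF_zero N).symm)
  | k+1 =>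
      rw [← summable_nat_add_iff 1]
      exact (((summable_pointwise xx (k+1)).mul_left (Real.exp (-((k:ℝ)+2)))).congr
        (fun m => (fF_succ_succ k m).symm))

lemma tsum_fF_inner (k : ℕ) :
    ∑' N : ℕ, fF (k+1, N)
      = Real.exp (-((k:ℝ)+2)) * (Real.exp xx * (Real.exp xx - 1)^k / ((k)! : ℝ)) := by
  rw [Summable.tsum_eq_zero_add (summable_fF_inner (k+1)), fF_succ_zero, zero_add]
  have h : ∀ m : ℕ, fF (k+1, m+1)
      = Real.exp (-((k:ℝ)+2)) * ((stirling (m+1) (k+1) : ℝ) * xx^m / ((m)! : ℝ)) := fF_succ_succ k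
  rw [tsum_congr h, tsum_mul_left, tsum_formula xx k]

lemma outer_eq (k : ℕ) :
    Real.exp (-((k:ℝ)+2)) * (Real.exp xx * (Real.exp xx - 1)^k / ((k)! : ℝ))
      = (Real.exp (-2) * Real.exp xx) * (((Real.exp xx - 1) * Real.exp (-1))^k / ((k)! : ℝ)) := by
  have h : Real.exp (-((k:ℝ)+2)) = Real.exp (-2) * Real.exp (-1)^k := by
    rw [← Real.exp_nat_mul, ← Real.exp_add]
    congr 1
    ring
  rw [h, mul_pow]
  ring

lemma summable_fF_outer : Summable (fun k => ∑' N : ℕ, fF (k, N)) := by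
  rw [← summable_nat_add_iff 1]
  apply ((Real.summable_pow_div_factorial ((Real.exp xx - 1) * Real.exp (-1))).mul_left
      (Real.exp (-2) * Real.exp xx)).congr
  intro k
  rw [tsum_fF_inner k, outer_eq k]

/-- The double series `∑_{k≥1} ∑_{N≥k} e^{−(k+1)} S(N,k) (1−1/e)^{N−1}/(N−1)!`
converges, with sum `c₃ = e^{−1} e^{−1/e} e^{(e^{1−1/e}−1)/e}`.
Here `p = (k, N)`. -/
theorem stmt_16 :
    Summable (fun p : ℕ × ℕ =>
      if 1 ≤ p.1 ∧ p.1 ≤ p.2 then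
        Real.exp (-((p.1 : ℝ) + 1)) * (stirling p.2 p.1 : ℝ) *
          (1 - 1 / Real.exp 1) ^ (p.2 - 1) / ((p.2 - 1)! : ℝ)
      else 0) ∧
    ∑' p : ℕ × ℕ,
        (if 1 ≤ p.1 ∧ p.1 ≤ p.2 then
          Real.exp (-((p.1 : ℝ) + 1)) * (stirling p.2 p.1 : ℝ) *
            (1 - 1 / Real.exp 1) ^ (p.2 - 1) / ((p.2 - 1)! : ℝ)
        else 0) =
      Real.exp (-1) * Real.exp (-(1 / Real.exp 1)) *
        Real.exp ((Real.exp (1 - 1 / Real.exp 1) - 1) / Real.exp 1) := by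
  have hsum : Summable fF := by
    rw [summable_prod_of_nonneg fF_nonneg]
    exact ⟨summable_fF_inner, summable_fF_outer⟩
  have htsum : ∑' p : ℕ × ℕ, fF p
      = Real.exp (-1) * Real.exp (-(1 / Real.exp 1)) *
        Real.exp ((Real.exp (1 - 1 / Real.exp 1) - 1) / Real.exp 1) := by
    rw [Summable.tsum_prod' hsum summable_fF_inner]
    rw [Summable.tsum_eq_zero_add summable_fF_outer]
    have h0 : ∑' N : ℕ, fF (0, N) = 0 := by
      rw [tsum_congr fF_zero]; exact tsum_zero
    rw [h0, zero_add]
    have h1 : ∀ k : ℕ, ∑' N : ℕ, fF (k+1, N)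
        = (Real.exp (-2) * Real.exp xx) * (((Real.exp xx - 1) * Real.exp (-1))^k / ((k)! : ℝ)) := by
      intro k; rw [tsum_fF_inner k, outer_eq k]
    rw [tsum_congr h1, tsum_mul_left, tsum_exp,
      ← Real.exp_add, ← Real.exp_add, ← Real.exp_add, ← Real.exp_add]
    have hx : xx = 1 - 1 / Real.exp 1 := rfl
    congr 1
    rw [hx, Real.exp_neg]
    have he : Real.exp 1 ≠ 0 := Real.exp_ne_zero 1
    field_simp
    ring
  exact ⟨hsum, htsum⟩
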